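/- Let X be a rearrangement invariant Banach sequence space with the Fatou property. Then for every x ∈ X, dist(x, X_a) = dist(x*, X_a), where x* is the non-increasing rearrangement of x. -/

import Mathlib

open Filter Topology MeasureTheory Set

/-- A **Banach ideal space** on a measure space `(α, μ)`: a collection of (real-valued)
measurable functions with a complete lattice-compatible norm satisfying the ideal property. -/
structure BanachIdealSpace (α : Type*) [MeasurableSpace α] (μ : Measure α) where
  Mem : (α → ℝ) → Prop
  N : (α → ℝ) → ℝ
  mem_zero : Mem 0
  mem_add : ∀ f g, Mem f → Mem g → Mem (f + g)
  mem_smul : ∀ (c : ℝ) f, Mem f → Mem (c • f)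
  measurable : ∀ f, Mem f → AEMeasurable f μ
  N_nonneg : ∀ f, 0 ≤ N f
  N_zero : N 0 = 0
  N_eq_zero : ∀ f, Mem f → N f = 0 → (∀ᵐ x ∂μ, f x = 0)
  N_add : ∀ f g, Mem f → Mem g → N (f + g) ≤ N f + N g
  N_smul : ∀ (c : ℝ) f, N (c • f) = |c| * N f
  ideal : ∀ f g, AEMeasurable f μ → (∀ᵐ x ∂μ, |f x| ≤ |g x|) → Mem g →
    Mem f ∧ N f ≤ N g
  complete : ∀ u : ℕ → (α → ℝ), (∀ n, Mem (u n)) →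
    (∀ ε : ℝ, 0 < ε → ∃ n₀ : ℕ, ∀ m n, n₀ ≤ m → n₀ ≤ n → N (u m - u n) < ε) →
    ∃ f, Mem f ∧ Tendsto (fun n => N (u n - f)) atTop (𝓝 0)

namespace BanachIdealSpace

variable {α : Type*} [MeasurableSpace α] {μ : Measure α}

/-- Distance (w.r.t. a norm functional `N`) from `f` to a set `S` of functions. -/
noncomputable def distIn (N : (α → ℝ) → ℝ) (f : α → ℝ) (S : Set (α → ℝ)) : ℝ :=
  sInf ((fun g => N (f - g)) '' S)

/-- The set of **order continuous elements** of a (generalized) function space given by a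
membership predicate `Mem` and a norm `N`: those `f` such that every sequence `uₙ` with
`0 ≤ uₙ ≤ |f|` a.e., a.e. non-increasing and converging to `0` a.e., satisfies `N (uₙ) → 0`. -/
def ocSet (μ : Measure α) (Mem : (α → ℝ) → Prop) (N : (α → ℝ) → ℝ) : Set (α → ℝ) :=
  {f | Mem f ∧ ∀ u : ℕ → (α → ℝ), (∀ n, Mem (u n)) →
    (∀ n, ∀ᵐ x ∂μ, 0 ≤ u n x ∧ u n x ≤ |f x|) →
    (∀ n, ∀ᵐ x ∂μ, u (n + 1) x ≤ u n x) →
    (∀ᵐ x ∂μ, Tendsto (fun n => u n x) atTop (𝓝 0)) →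
    Tendsto (fun n => N (u n)) atTop (𝓝 0)}

/-- The ideal `X_a` of order continuous elements of a Banach ideal space `X`. -/
def oc (X : BanachIdealSpace α μ) : Set (α → ℝ) := ocSet μ X.Mem X.N

/-- An **order ideal** of a Banach ideal space: a closed solid linear subspace. -/
structure IsOrderIdeal (X : BanachIdealSpace α μ) (J : Set (α → ℝ)) : Prop where
  subset : ∀ f ∈ J, X.Mem f
  zero : (0 : α → ℝ) ∈ J
  add : ∀ f g, f ∈ J → g ∈ J → f + g ∈ J
  smul : ∀ (c : ℝ) f, f ∈ J → c • f ∈ J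
  solid : ∀ f g, f ∈ J → X.Mem g → (∀ᵐ x ∂μ, |g x| ≤ |f x|) → g ∈ J
  closed : ∀ (u : ℕ → (α → ℝ)) f, (∀ n, u n ∈ J) → X.Mem f →
    Tendsto (fun n => X.N (f - u n)) atTop (𝓝 0) → f ∈ J

/-- The **Fatou property** of a Banach ideal space. -/
def Fatou (X : BanachIdealSpace α μ) : Prop :=
  ∀ (u : ℕ → (α → ℝ)) (f : α → ℝ), (∀ n, X.Mem (u n)) → AEMeasurable f μ →
    (∀ᵐ x ∂μ, 0 ≤ u 0 x) → (∀ᵐ x ∂μ, Monotone fun n => u n x) →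
    (∀ᵐ x ∂μ, Tendsto (fun n => u n x) atTop (𝓝 (f x))) →
    BddAbove (Set.range fun n => X.N (u n)) →
    X.Mem f ∧ Tendsto (fun n => X.N (u n)) atTop (𝓝 (X.N f))

/-- The **semi-Fatou property**: if `0 ≤ uₙ ↑ f ∈ X` then `‖uₙ‖ ↑ ‖f‖`. -/
def SemiFatou (X : BanachIdealSpace α μ) : Prop :=
  ∀ (u : ℕ → (α → ℝ)) (f : α → ℝ), (∀ n, X.Mem (u n)) → X.Mem f →
    (∀ᵐ x ∂μ, 0 ≤ u 0 x) → (∀ᵐ x ∂μ, Monotone fun n => u n x) →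
    (∀ᵐ x ∂μ, Tendsto (fun n => u n x) atTop (𝓝 (f x))) →
    Tendsto (fun n => X.N (u n)) atTop (𝓝 (X.N f))

/-- A Banach ideal space is **rearrangement invariant (symmetric)**: equimeasurable
functions belong to the space simultaneously and have equal norms. -/
def Symmetric (X : BanachIdealSpace α μ) : Prop :=
  ∀ f g, AEMeasurable f μ →
    (∀ lam : ℝ, 0 < lam → μ {x | lam < |f x|} = μ {x | lam < |g x|}) →
    X.Mem g → X.Mem f ∧ X.N f = X.N g

/-- The **non-increasing rearrangement** of a function `f` (w.r.t. the measure `μ`). -/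
noncomputable def rear (μ : Measure α) (f : α → ℝ) (t : ℝ) : ℝ :=
  sInf {lam : ℝ | 0 < lam ∧ μ {x | lam < |f x|} ≤ ENNReal.ofReal t}

/-- A (generalized) function space given by `(Mem, N)` contains a **lattice isometric copy
of `ℓ∞`**: there is a linear map from bounded sequences which preserves absolute values
(hence the lattice operations) and is an isometry for the sup norm on bounded sequences. -/
def HasLatticeCopyLinf (Mem : (α → ℝ) → Prop) (N : (α → ℝ) → ℝ) : Prop :=
  ∃ T : (ℕ → ℝ) → (α → ℝ),
    (∀ x y, T (x + y) = T x + T y) ∧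
    (∀ (c : ℝ) x, T (c • x) = c • T x) ∧
    (∀ x, T (fun n => |x n|) = fun t => |T x t|) ∧
    (∀ x : ℕ → ℝ, BddAbove (Set.range fun n => |x n|) →
      Mem (T x) ∧ N (T x) = ⨆ n, |x n|)

end BanachIdealSpace

open BanachIdealSpace

open scoped ENNReal

/-- The non-increasing rearrangement of a sequence:
`x*ₙ = inf {λ > 0 : #{k : |x_k| > λ} < n}` (here indexed from `0`, so the set-condition is
`< n + 1`). -/
noncomputable def rearSeq (x : ℕ → ℝ) (n : ℕ) : ℝ :=
  sInf {lam : ℝ | 0 < lam ∧ Measure.count {k | lam < |x k|} < (n : ℕ∞) + 1}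


namespace RearAux

local notation "cnt" => (Measure.count : Measure ℕ)

lemma nmeas (s : Set ℕ) : MeasurableSet s := s.to_countable.measurableSet

lemma nae {p : ℕ → Prop} : (∀ᵐ k ∂cnt, p k) ↔ ∀ k, p k := by
  rw [ae_iff, Measure.count_eq_zero_iff]
  simp [Set.eq_empty_iff_forall_notMem]

/-- distribution counting function -/
noncomputable def cc (x : ℕ → ℝ) (lam : ℝ) : ℝ≥0∞ := cnt {k | lam < |x k|}

lemma cc_anti (x : ℕ → ℝ) {a b : ℝ} (h : a ≤ b) : cc x b ≤ cc x a :=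
  measure_mono fun k hk => lt_of_le_of_lt h hk

lemma count_lt_succ_iff (s : Set ℕ) (k : ℕ) :
    Measure.count s < (k:ℝ≥0∞) + 1 ↔ Measure.count s ≤ k := by
  by_cases h : s.Finite
  · rw [Measure.count_apply_finite s h]
    exact_mod_cast Nat.lt_succ_iff
  · rw [Measure.count_apply_infinite h]
    simp

def Dset (x : ℕ → ℝ) (n : ℕ) : Set ℝ := {lam : ℝ | 0 < lam ∧ cc x lam ≤ n}

lemma rearSeq_eq (x : ℕ → ℝ) (n : ℕ) : rearSeq x n = sInf (Dset x n) := by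
  unfold rearSeq Dset
  congr 1
  ext lam
  simp only [Set.mem_setOf_eq, and_congr_right_iff]
  intro _
  rw [show (((n : ℕ∞) : ℝ≥0∞)) = (n:ℝ≥0∞) from ENat.toENNReal_coe n]
  exact count_lt_succ_iff _ n

def Bdd (x : ℕ → ℝ) : Prop := ∃ C : ℝ, 0 ≤ C ∧ ∀ k, |x k| ≤ C

lemma Dset_bddBelow (x : ℕ → ℝ) (n : ℕ) : BddBelow (Dset x n) :=
  ⟨0, fun _ ha => ha.1.le⟩

lemma Dset_nonempty {x : ℕ → ℝ} (hb : Bdd x) (n : ℕ) : (Dset x n).Nonempty := by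
  obtain ⟨C, hC0, hC⟩ := hb
  refine ⟨C + 1, by linarith, ?_⟩
  have : {k | C + 1 < |x k|} = (∅ : Set ℕ) := by
    ext k
    simp only [Set.mem_setOf_eq, Set.mem_empty_iff_false, iff_false, not_lt]
    linarith [hC k]
  simp [cc, this]

lemma rearSeq_nonneg (x : ℕ → ℝ) (n : ℕ) : 0 ≤ rearSeq x n := by
  rw [rearSeq_eq]
  exact Real.sInf_nonneg fun lam hlam => hlam.1.le

lemma abs_rearSeq (x : ℕ → ℝ) (n : ℕ) : |rearSeq x n| = rearSeq x n :=
  abs_of_nonneg (rearSeq_nonneg x n)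

lemma exists_card_subset {s : Set ℕ} {k : ℕ} (h : (k:ℝ≥0∞) < Measure.count s) :
    ∃ F : Finset ℕ, ↑F ⊆ s ∧ F.card = k + 1 := by
  by_cases hf : s.Finite
  · rw [Measure.count_apply_finite s hf] at h
    have h' : k + 1 ≤ hf.toFinset.card := by exact_mod_cast h
    obtain ⟨t, ht, hc⟩ := hf.toFinset.exists_subset_card_eq h'
    exact ⟨t, fun i hi => hf.mem_toFinset.mp (ht hi), hc⟩
  · exact Set.Infinite.exists_subset_card_eq hf (k+1)

lemma succ_le_count {s : Set ℕ} {k : ℕ} (h : (k:ℝ≥0∞) < Measure.count s) :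
    (k:ℝ≥0∞) + 1 ≤ Measure.count s := by
  obtain ⟨F, hFs, hFc⟩ := exists_card_subset h
  calc (k:ℝ≥0∞)+1 = ((k+1:ℕ):ℝ≥0∞) := by push_cast; ring
    _ = (F.card:ℝ≥0∞) := by rw [hFc]
    _ = Measure.count (↑F : Set ℕ) := (Measure.count_apply_finset F).symm
    _ ≤ _ := measure_mono hFs

lemma lt_rearSeq_iff {x : ℕ → ℝ} (hb : Bdd x) {n : ℕ} {lam : ℝ} (hlam : 0 < lam) :
    lam < rearSeq x n ↔ (n : ℝ≥0∞) < cc x lam := by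
  rw [rearSeq_eq]
  constructor
  · intro h
    by_contra hc
    push_neg at hc
    exact absurd (csInf_le (Dset_bddBelow x n) ⟨hlam, hc⟩) (not_le.mpr h)
  · intro h
    by_contra hc
    push_neg at hc
    obtain ⟨F, hFs, hFc⟩ := exists_card_subset h
    have hFne : F.Nonempty := by rw [← Finset.card_pos, hFc]; omega
    set v := (F.image fun i => |x i|).min' (hFne.image _) with hv
    have hvF : ∀ i ∈ F, v ≤ |x i| := fun i hi =>
      Finset.min'_le _ _ (Finset.mem_image_of_mem _ hi)
    have hvlam : lam < v := by
      obtain ⟨b, hbmem, hbeq⟩ := Finset.mem_image.mp ((F.image fun i => |x i|).min'_mem (hFne.image _))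
      rw [hv, ← hbeq] at *
      exact hFs hbmem
    obtain ⟨mu, hmu, hmult⟩ := Real.lt_sInf_add_pos (Dset_nonempty hb n) (show (0:ℝ) < v - lam by linarith)
    have hmuv : mu < v := by
      have := le_trans hc (le_refl lam)
      calc mu < sInf (Dset x n) + (v - lam) := hmult
        _ ≤ lam + (v - lam) := by linarith
        _ = v := by ring
    have hsub : (↑F : Set ℕ) ⊆ {k | mu < |x k|} :=
      fun i hi => lt_of_lt_of_le hmuv (hvF i hi)
    have hcount : (n:ℝ≥0∞) + 1 ≤ cc x mu := by
      calc (n:ℝ≥0∞) + 1 = ((n+1 : ℕ) : ℝ≥0∞) := by push_cast; ring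
        _ = (F.card : ℝ≥0∞) := by rw [hFc]
        _ = Measure.count (↑F : Set ℕ) := (Measure.count_apply_finset F).symm
        _ ≤ cc x mu := measure_mono hsub
    have : (n:ℝ≥0∞) < (n:ℝ≥0∞) + 1 := by
      exact ENNReal.lt_add_right (by simp) one_ne_zero
    exact absurd hmu.2 (not_le.mpr (lt_of_lt_of_le this hcount))

lemma rearSeq_le_of {x y : ℕ → ℝ} (hbx : Bdd x) (hby : Bdd y) {n m : ℕ}
    (h : ∀ lam : ℝ, 0 < lam → (n:ℝ≥0∞) < cc x lam → (m:ℝ≥0∞) < cc y lam) :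
    rearSeq x n ≤ rearSeq y m := by
  by_contra hc
  push_neg at hc
  obtain ⟨lam, h1, h2⟩ := exists_between hc
  have hlam : 0 < lam := lt_of_le_of_lt (rearSeq_nonneg y m) h1
  exact absurd ((lt_rearSeq_iff hby hlam).mpr (h lam hlam ((lt_rearSeq_iff hbx hlam).mp h2)))
    (not_lt.mpr h1.le)

lemma rearSeq_le_bound {x : ℕ → ℝ} {C : ℝ} (hC0 : 0 ≤ C) (hC : ∀ k, |x k| ≤ C) (n : ℕ) :
    rearSeq x n ≤ C := by
  rw [rearSeq_eq]
  refine le_of_forall_pos_le_add fun ε hε => ?_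
  refine csInf_le (Dset_bddBelow x n) ⟨by linarith, ?_⟩
  have : {k | C + ε < |x k|} = (∅ : Set ℕ) := by
    ext k
    simp only [Set.mem_setOf_eq, Set.mem_empty_iff_false, iff_false, not_lt]
    linarith [hC k]
  simp [cc, this]

lemma bdd_rearSeq {x : ℕ → ℝ} (hb : Bdd x) : Bdd (rearSeq x) := by
  obtain ⟨C, hC0, hC⟩ := hb
  exact ⟨C, hC0, fun n => by rw [abs_rearSeq]; exact rearSeq_le_bound hC0 hC n⟩

lemma rearSeq_anti {x : ℕ → ℝ} (hb : Bdd x) {k m : ℕ} (h : k ≤ m) :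
    rearSeq x m ≤ rearSeq x k :=
  rearSeq_le_of hb hb fun _ _ hlt =>
    lt_of_le_of_lt (by exact_mod_cast Nat.cast_le.mpr h) hlt

lemma count_initial (s : Set ℕ) :
    cnt {k : ℕ | (k:ℝ≥0∞) < Measure.count s} = Measure.count s := by
  by_cases hf : s.Finite
  · rw [Measure.count_apply_finite s hf]
    have h1 : {k : ℕ | (k:ℝ≥0∞) < (hf.toFinset.card : ℝ≥0∞)} = ↑(Finset.range hf.toFinset.card) := by
      ext k; simp [Nat.cast_lt]
    rw [h1, Measure.count_apply_finset, Finset.card_range]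
  · rw [Measure.count_apply_infinite hf]
    have h1 : {k : ℕ | (k:ℝ≥0∞) < ⊤} = Set.univ := by
      ext k; simp [ENNReal.natCast_lt_top k]
    rw [h1]
    exact Measure.count_apply_infinite Set.infinite_univ


lemma setOf_rearSeq {x : ℕ → ℝ} (hb : Bdd x) {lam : ℝ} (hlam : 0 < lam) :
    {k | lam < |rearSeq x k|} = {k : ℕ | (k:ℝ≥0∞) < cc x lam} := by
  ext k
  simp only [Set.mem_setOf_eq, abs_rearSeq]
  exact lt_rearSeq_iff hb hlam

lemma cc_rearSeq {x : ℕ → ℝ} (hb : Bdd x) {lam : ℝ} (hlam : 0 < lam) :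
    cc (rearSeq x) lam = cc x lam := by
  unfold cc
  rw [setOf_rearSeq hb hlam]
  exact count_initial _

lemma rearSeq_idem {x : ℕ → ℝ} (hb : Bdd x) : rearSeq (rearSeq x) = rearSeq x := by
  funext n
  rw [rearSeq_eq, rearSeq_eq]
  congr 1
  ext lam
  exact and_congr_right fun hlam => by rw [cc_rearSeq hb hlam]

/-- zero out the finite set `S` -/
def outS (x : ℕ → ℝ) (S : Finset ℕ) : ℕ → ℝ := fun k => if k ∈ S then 0 else x k
/-- restrict to the finite set `S` -/
def inS (x : ℕ → ℝ) (S : Finset ℕ) : ℕ → ℝ := fun k => if k ∈ S then x k else 0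
/-- shift -/
def shf (x : ℕ → ℝ) (m : ℕ) : ℕ → ℝ := fun k => x (m + k)

lemma sub_inS (x : ℕ → ℝ) (S : Finset ℕ) : x - inS x S = outS x S :=
  funext fun k => by by_cases h : k ∈ S <;> simp [inS, outS, h]

lemma abs_outS_le (x : ℕ → ℝ) (S : Finset ℕ) (k : ℕ) : |outS x S k| ≤ |x k| := by
  by_cases h : k ∈ S <;> simp [outS, h, abs_nonneg]

lemma bdd_outS {x : ℕ → ℝ} (hb : Bdd x) (S : Finset ℕ) : Bdd (outS x S) := by
  obtain ⟨C, hC0, hC⟩ := hb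
  exact ⟨C, hC0, fun k => le_trans (abs_outS_le x S k) (hC k)⟩

lemma cc_outS (x : ℕ → ℝ) (S : Finset ℕ) {lam : ℝ} (hlam : 0 < lam) :
    cc (outS x S) lam = cnt ({k | lam < |x k|} \ ↑S) := by
  unfold cc
  congr 1
  ext k
  by_cases h : k ∈ S <;> simp [outS, h, hlam.not_gt, abs_of_nonneg]

lemma cc_le_outS_add (x : ℕ → ℝ) (S : Finset ℕ) {lam : ℝ} (hlam : 0 < lam) :
    cc x lam ≤ cc (outS x S) lam + S.card := by
  rw [cc_outS x S hlam]
  calc cc x lam = cnt {k | lam < |x k|} := rfl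
    _ = cnt (({k | lam < |x k|} \ ↑S) ∪ ({k | lam < |x k|} ∩ ↑S)) := by
        rw [Set.diff_union_inter]
    _ ≤ cnt ({k | lam < |x k|} \ ↑S) + cnt ({k | lam < |x k|} ∩ ↑S) := measure_union_le _ _
    _ ≤ cnt ({k | lam < |x k|} \ ↑S) + cnt (↑S : Set ℕ) := by
        exact add_le_add le_rfl (measure_mono Set.inter_subset_right)
    _ = cnt ({k | lam < |x k|} \ ↑S) + S.card := by rw [Measure.count_apply_finset]

lemma shift_le_out {x : ℕ → ℝ} (hb : Bdd x) (S : Finset ℕ) (k : ℕ) :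
    rearSeq x (S.card + k) ≤ rearSeq (outS x S) k := by
  apply rearSeq_le_of hb (bdd_outS hb S)
  intro lam hlam h
  have hle := cc_le_outS_add x S hlam
  have h2 : (k:ℝ≥0∞) + S.card < cc (outS x S) lam + S.card := by
    calc (k:ℝ≥0∞) + S.card = ((S.card + k : ℕ) : ℝ≥0∞) := by push_cast; ring
      _ < cc x lam := h
      _ ≤ cc (outS x S) lam + S.card := hle
  exact (ENNReal.add_lt_add_iff_right (by simp)).mp h2

lemma selection (x : ℕ → ℝ) (n : ℕ) :
    ∃ S : Finset ℕ, ∀ lam : ℝ, 0 < lam → ({k | lam < |x k|}).Finite →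
      ({k | lam < |x k|} ⊆ ↑S ∨ (n:ℝ≥0∞) ≤ cnt ({k | lam < |x k|} ∩ ↑S)) := by
  by_cases h1 : ∃ lam : ℝ, 0 < lam ∧ ({k | lam < |x k|}).Finite ∧
      (n:ℝ≥0∞) ≤ cnt {k | lam < |x k|}
  · obtain ⟨l0, hl0, hf0, hn0⟩ := h1
    refine ⟨hf0.toFinset, fun lam hlam hf => ?_⟩
    rcases le_or_gt l0 lam with hcmp | hcmp
    · left
      intro k hk
      simp only [Finset.coe_sort_coe, Set.Finite.coe_toFinset]
      exact lt_of_le_of_lt hcmp hk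
    · right
      have hsub : {k | l0 < |x k|} ⊆ {k | lam < |x k|} :=
        fun k hk => lt_trans hcmp hk
      have heq : {k | lam < |x k|} ∩ ↑hf0.toFinset = {k | l0 < |x k|} := by
        rw [Set.Finite.coe_toFinset]
        exact Set.inter_eq_self_of_subset_right hsub
      rw [heq]
      exact hn0
  · push_neg at h1
    by_cases h2 : ∃ lam : ℝ, 0 < lam ∧ ({k | lam < |x k|}).Finite
    · obtain ⟨l', hl', hf'⟩ := h2
      set CS : Set ℕ :=
        {m | ∃ lam : ℝ, ∃ _ : 0 < lam, ∃ hf : ({k | lam < |x k|}).Finite, hf.toFinset.card = m}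
        with hCS
      have hCSne : CS.Nonempty := ⟨hf'.toFinset.card, l', hl', hf', rfl⟩
      have hCSbdd : BddAbove CS := by
        refine ⟨n, ?_⟩
        rintro m ⟨lam, hlam, hf, rfl⟩
        have := h1 lam hlam hf
        rw [Measure.count_apply_finite _ hf] at this
        exact_mod_cast this.le
      obtain ⟨l1, hl1, hf1, hc1⟩ := Nat.sSup_mem hCSne hCSbdd
      refine ⟨hf1.toFinset, fun lam hlam hf => Or.inl ?_⟩
      rcases le_or_gt l1 lam with hcmp | hcmp
      · intro k hk
        simp only [Set.Finite.coe_toFinset]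
        exact lt_of_le_of_lt hcmp hk
      · have hsub : hf1.toFinset ⊆ hf.toFinset := by
          intro k hk
          rw [Set.Finite.mem_toFinset] at *
          exact lt_trans hcmp hk
        have hcard : hf.toFinset.card ≤ hf1.toFinset.card := by
          rw [hc1]
          exact le_csSup hCSbdd ⟨lam, hlam, hf, rfl⟩
        have heq := Finset.eq_of_subset_of_card_le hsub hcard
        intro k hk
        rw [heq, Set.Finite.coe_toFinset]
        exact hk
    · push_neg at h2
      exact ⟨∅, fun lam hlam hf => absurd hf (h2 lam hlam)⟩

lemma out_le_shift {x : ℕ → ℝ} (hb : Bdd x) (n : ℕ) :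
    ∃ S : Finset ℕ, ∀ k, rearSeq (outS x S) k ≤ rearSeq x (n + k) := by
  obtain ⟨S, hS⟩ := selection x n
  refine ⟨S, fun k => rearSeq_le_of (bdd_outS hb S) hb ?_⟩
  intro lam hlam h
  rw [cc_outS x S hlam] at h
  by_cases hf : ({k | lam < |x k|}).Finite
  · rcases hS lam hlam hf with hsub | hcard
    · rw [Set.diff_eq_empty.mpr hsub] at h
      simp at h
    · have hunion : ({k | lam < |x k|} \ ↑S) ∪ ({k | lam < |x k|} ∩ ↑S) = {k | lam < |x k|} :=
        Set.diff_union_inter _ _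
      have hdisj : Disjoint ({k | lam < |x k|} \ ↑S) ({k | lam < |x k|} ∩ ↑S) :=
        Set.disjoint_of_subset (Set.diff_subset_diff_left (le_refl _)) Set.inter_subset_right
          disjoint_sdiff_left
      have hsum : cc x lam = cnt ({k | lam < |x k|} \ ↑S) + cnt ({k | lam < |x k|} ∩ ↑S) := by
        unfold cc
        rw [← hunion, measure_union hdisj (nmeas _)]
        rw [hunion]  -- fix sets back? no
      calc ((n + k : ℕ) : ℝ≥0∞) < ((k + 1 + n : ℕ) : ℝ≥0∞) := by exact_mod_cast (by omega : n + k < k + 1 + n)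
        _ = ((k:ℝ≥0∞) + 1) + (n:ℝ≥0∞) := by push_cast; ring
        _ ≤ cnt ({k | lam < |x k|} \ ↑S) + cnt ({k | lam < |x k|} ∩ ↑S) :=
            add_le_add (succ_le_count h) hcard
        _ = cc x lam := hsum.symm
  · have : cc x lam = ⊤ := Measure.count_apply_infinite hf
    rw [this]
    exact ENNReal.natCast_lt_top _

lemma count_aux (m : ℕ) (s : Set ℕ) :
    cnt {k : ℕ | (k:ℝ≥0∞) < Measure.count s ∧ m ≤ k}
      = cnt {k : ℕ | ((m+k:ℕ):ℝ≥0∞) < Measure.count s} := by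
  by_cases hf : s.Finite
  · rw [Measure.count_apply_finite s hf]
    set c := hf.toFinset.card with hc
    have h1 : {k : ℕ | (k:ℝ≥0∞) < (c:ℝ≥0∞) ∧ m ≤ k} = ↑(Finset.Ico m c) := by
      ext k
      simp only [Set.mem_setOf_eq, Nat.cast_lt, Finset.coe_Ico, Set.mem_Ico]
      tauto
    have h2 : {k : ℕ | ((m+k:ℕ):ℝ≥0∞) < (c:ℝ≥0∞)} = ↑(Finset.range (c - m)) := by
      ext k
      simp only [Set.mem_setOf_eq, Nat.cast_lt, Finset.coe_range, Set.mem_Iio]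
      omega
    rw [h1, h2, Measure.count_apply_finset, Measure.count_apply_finset,
      Nat.card_Ico, Finset.card_range]
  · rw [Measure.count_apply_infinite hf]
    have h1 : {k : ℕ | (k:ℝ≥0∞) < ⊤ ∧ m ≤ k} = {k : ℕ | m ≤ k} := by
      ext k; simp [ENNReal.natCast_lt_top]
    have h2 : {k : ℕ | ((m+k:ℕ):ℝ≥0∞) < ⊤} = Set.univ := by
      ext k; simp [ENNReal.natCast_lt_top]
    rw [h1, h2, Measure.count_apply_infinite, Measure.count_apply_infinite Set.infinite_univ]
    have : {k : ℕ | m ≤ k} = Set.Ici m := rfl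
    rw [this]
    exact Set.Ici_infinite m

lemma cc_out_range_shift {x : ℕ → ℝ} (hb : Bdd x) (m : ℕ) {lam : ℝ} (hlam : 0 < lam) :
    cc (outS (rearSeq x) (Finset.range m)) lam = cc (shf (rearSeq x) m) lam := by
  rw [cc_outS _ _ hlam]
  have h1 : {k | lam < |rearSeq x k|} \ ↑(Finset.range m)
      = {k : ℕ | (k:ℝ≥0∞) < cc x lam ∧ m ≤ k} := by
    rw [setOf_rearSeq hb hlam]
    ext k
    simp only [Set.mem_diff, Set.mem_setOf_eq, Finset.coe_range, Set.mem_Iio, not_lt]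
  have h2 : {k | lam < |shf (rearSeq x) m k|} = {k : ℕ | ((m+k:ℕ):ℝ≥0∞) < cc x lam} := by
    ext k
    simp only [Set.mem_setOf_eq, shf, abs_rearSeq]
    exact lt_rearSeq_iff hb hlam
  rw [h1]
  unfold cc
  rw [h2]
  exact count_aux m _



/-! ### Banach ideal space level lemmas -/

variable {X : BanachIdealSpace ℕ Measure.count}

/-- the standard unit vectors -/
def eK (j : ℕ) : ℕ → ℝ := fun i => if i = j then 1 else 0

lemma mem_of_le {f g : ℕ → ℝ} (h : ∀ k, |f k| ≤ |g k|) (hg : X.Mem g) :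
    X.Mem f ∧ X.N f ≤ X.N g :=
  X.ideal f g (measurable_from_top).aemeasurable (nae.mpr h) hg

lemma N_congr_abs {f g : ℕ → ℝ} (h : ∀ k, |f k| = |g k|) (hg : X.Mem g) :
    X.Mem f ∧ X.N f = X.N g := by
  obtain ⟨h1, h2⟩ := mem_of_le (f := f) (g := g) (fun k => (h k).le) hg
  exact ⟨h1, le_antisymm h2 (mem_of_le (fun k => (h k).ge) h1).2⟩

lemma symm' (hsymm : X.Symmetric) {f g : ℕ → ℝ}
    (h : ∀ lam : ℝ, 0 < lam → cc f lam = cc g lam) (hg : X.Mem g) :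
    X.Mem f ∧ X.N f = X.N g :=
  hsymm f g (measurable_from_top).aemeasurable (fun lam hl => h lam hl) hg

lemma mem_sub {f g : ℕ → ℝ} (hf : X.Mem f) (hg : X.Mem g) : X.Mem (f - g) := by
  have h := X.mem_add f ((-1:ℝ) • g) hf (X.mem_smul _ _ hg)
  have : f + (-1:ℝ) • g = f - g := funext fun k => by
    simp [sub_eq_add_neg]
  rwa [this] at h

lemma cc_eK (k : ℕ) (lam : ℝ) (hlam : 0 < lam) :
    cc (eK k) lam = if lam < 1 then 1 else 0 := by
  unfold cc eK
  by_cases h : lam < 1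
  · have : {i : ℕ | lam < |if i = k then (1:ℝ) else 0|} = {k} := by
      ext i
      by_cases hik : i = k <;> simp [hik, h, hlam.not_gt]
    simp [this, h]
  · have : {i : ℕ | lam < |if i = k then (1:ℝ) else 0|} = (∅ : Set ℕ) := by
      ext i
      by_cases hik : i = k <;> simp [hik, h, hlam.not_gt]
    simp [this, h]

lemma mem_eK_of {z : ℕ → ℝ} (hz : X.Mem z) {j : ℕ} (hj : z j ≠ 0) : X.Mem (eK j) := by
  have h1 : X.Mem ((|z j|⁻¹ : ℝ) • z) := X.mem_smul _ _ hz
  have hj' : (0:ℝ) < |z j| := abs_pos.mpr hj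
  refine (mem_of_le (fun k => ?_) h1).1
  by_cases hk : k = j
  · subst hk
    simp [eK, abs_of_nonneg, abs_mul, abs_inv, abs_abs]
    rw [inv_mul_cancel₀ (ne_of_gt hj')]
  · simp [eK, hk, Pi.smul_apply, abs_nonneg]
    positivity

lemma mem_eK_all (hsymm : X.Symmetric) {z : ℕ → ℝ} (hz : X.Mem z) {j : ℕ} (hj : z j ≠ 0)
    (k : ℕ) : X.Mem (eK k) :=
  (symm' hsymm (fun lam hl => by rw [cc_eK k lam hl, cc_eK j lam hl]) (mem_eK_of hz hj)).1

lemma N_eK_eq (hsymm : X.Symmetric) {k j : ℕ} (hj : X.Mem (eK j)) :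
    X.N (eK k) = X.N (eK j) :=
  (symm' hsymm (fun lam hl => by rw [cc_eK k lam hl, cc_eK j lam hl]) hj).2

lemma N_eK_pos {j : ℕ} (hj : X.Mem (eK j)) : 0 < X.N (eK j) := by
  rcases (X.N_nonneg (eK j)).lt_or_eq with h | h
  · exact h
  · exfalso
    have := nae.mp (X.N_eq_zero _ hj h.symm)
    have hj1 := this j
    simp [eK] at hj1

lemma bdd_of_mem (hsymm : X.Symmetric) {x : ℕ → ℝ} (hx : X.Mem x) {j : ℕ} (hj : x j ≠ 0)
    {z : ℕ → ℝ} (hz : X.Mem z) : Bdd z := by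
  have hej : X.Mem (eK j) := mem_eK_of hx hj
  have hpos := N_eK_pos hej
  refine ⟨X.N z / X.N (eK j), div_nonneg (X.N_nonneg z) hpos.le, fun k => ?_⟩
  rw [le_div_iff₀ hpos]
  have h1 : ∀ i, |(|z k| • eK k) i| ≤ |z i| := by
    intro i
    by_cases hik : i = k
    · subst hik; simp [eK, abs_abs]
    · simp [eK, hik, abs_nonneg]
  have h2 := mem_of_le h1 hz
  have h3 : X.N (|z k| • eK k) = |z k| * X.N (eK k) := by
    rw [X.N_smul, abs_abs]
  rw [h3] at h2
  calc |z k| * X.N (eK j) = |z k| * X.N (eK k) := by rw [N_eK_eq (k := k) (j := j) hsymm hej]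
    _ ≤ X.N z := h2.2

lemma N_le_sum (he : ∀ k, X.Mem (eK k)) (S : Finset ℕ) :
    ∀ u : ℕ → ℝ, X.Mem u → (∀ i, 0 ≤ u i) → (∀ i ∉ S, u i = 0) →
      X.N u ≤ ∑ k ∈ S, u k * X.N (eK k) := by
  induction S using Finset.induction_on with
  | empty =>
    intro u hu _ h0
    have : u = 0 := funext fun i => h0 i (by simp)
    simp [this, X.N_zero]
  | @insert a S ha ih =>
    intro u hu hpos h0
    set u' : ℕ → ℝ := fun i => if i = a then 0 else u i with hu'def
    have hle : ∀ i, |u' i| ≤ |u i| := fun i => by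
      by_cases h : i = a <;> simp [hu'def, h, abs_nonneg]
    have hu' : X.Mem u' := (mem_of_le hle hu).1
    have hdecomp : u = u a • eK a + u' := funext fun i => by
      by_cases h : i = a
      · subst h; simp [eK, hu'def]
      · simp [eK, hu'def, h]
    have h1 : X.N u ≤ X.N (u a • eK a) + X.N u' := by
      conv_lhs => rw [hdecomp]
      exact X.N_add _ _ (X.mem_smul _ _ (he a)) hu'
    have h2 : X.N (u a • eK a) = u a * X.N (eK a) := by
      rw [X.N_smul, abs_of_nonneg (hpos a)]
    have h3 := ih u' hu' (fun i => by by_cases h : i = a <;> simp [hu'def, h, hpos i])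
      (fun i hi => by
        by_cases h : i = a
        · simp [hu'def, h]
        · simp only [hu'def, if_neg h]
          exact h0 i (by simp [h, hi]))
    have h4 : ∑ k ∈ S, u' k * X.N (eK k) = ∑ k ∈ S, u k * X.N (eK k) :=
      Finset.sum_congr rfl fun k hk => by
        have : k ≠ a := fun hka => ha (hka ▸ hk)
        simp [hu'def, this]
    rw [Finset.sum_insert ha, ← h2]
    rw [h4] at h3
    linarith

lemma finsupp_oc (he : ∀ k, X.Mem (eK k)) {f : ℕ → ℝ} (hf : X.Mem f)
    (S : Finset ℕ) (hs : ∀ i ∉ S, f i = 0) : f ∈ X.oc := by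
  refine ⟨hf, fun u hum hub _ hlim => ?_⟩
  have hub' : ∀ n i, 0 ≤ u n i ∧ u n i ≤ |f i| := fun n => nae.mp (hub n)
  have hlim' : ∀ i, Tendsto (fun n => u n i) atTop (𝓝 0) := nae.mp hlim
  have key : ∀ n, X.N (u n) ≤ ∑ k ∈ S, u n k * X.N (eK k) := by
    intro n
    refine N_le_sum he S (u n) (hum n) (fun i => (hub' n i).1) (fun i hi => ?_)
    have h2 := (hub' n i).2
    rw [hs i hi] at h2
    simp only [abs_zero] at h2
    exact le_antisymm h2 (hub' n i).1
  have hsum : Tendsto (fun n => ∑ k ∈ S, u n k * X.N (eK k)) atTop (𝓝 0) := by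
    have : Tendsto (fun n => ∑ k ∈ S, u n k * X.N (eK k)) atTop
        (𝓝 (∑ k ∈ S, 0 * X.N (eK k))) :=
      tendsto_finset_sum _ fun k _ => (hlim' k).mul_const _
    simpa using this
  exact squeeze_zero (fun n => X.N_nonneg _) key hsum

lemma zero_oc : (0:ℕ→ℝ) ∈ X.oc := by
  refine ⟨X.mem_zero, fun u hum hub _ _ => ?_⟩
  have : ∀ n, u n = 0 := by
    intro n
    funext i
    have h := nae.mp (hub n) i
    simp only [Pi.zero_apply, abs_zero] at h
    exact le_antisymm h.2 h.1
  have heq : (fun n => X.N (u n)) = fun _ => 0 := funext fun n => by rw [this n, X.N_zero]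
  rw [heq]
  exact tendsto_const_nhds

/-- distance to the ideal of order continuous elements via tails -/
noncomputable def Ef (X : BanachIdealSpace ℕ Measure.count) (z : ℕ → ℝ) : ℝ :=
  sInf (Set.range fun S : Finset ℕ => X.N (outS z S))

lemma Ef_bddBelow (z : ℕ → ℝ) :
    BddBelow (Set.range fun S : Finset ℕ => X.N (outS z S)) := by
  refine ⟨0, ?_⟩
  rintro b ⟨S, rfl⟩
  exact X.N_nonneg _

lemma distIn_bddBelow (z : ℕ → ℝ) : BddBelow ((fun g => X.N (z - g)) '' X.oc) := by
  refine ⟨0, ?_⟩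
  rintro b ⟨y, _, rfl⟩
  exact X.N_nonneg _

lemma step1 (he : ∀ k, X.Mem (eK k)) {z : ℕ → ℝ} (hz : X.Mem z) :
    distIn X.N z X.oc = Ef X z := by
  apply le_antisymm
  · apply le_csInf (Set.range_nonempty _)
    rintro b ⟨S, rfl⟩
    have hmemin : X.Mem (inS z S) := by
      refine (mem_of_le (fun k => ?_) hz).1
      by_cases h : k ∈ S <;> simp [inS, h, abs_nonneg]
    have hin : inS z S ∈ X.oc :=
      finsupp_oc he hmemin S (fun i hi => by simp [inS, hi])
    show distIn X.N z X.oc ≤ X.N (outS z S)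
    rw [← sub_inS z S]
    exact csInf_le (distIn_bddBelow z) ⟨inS z S, hin, rfl⟩
  · apply le_csInf ⟨_, Set.mem_image_of_mem _ zero_oc⟩
    rintro b ⟨y, hy, rfl⟩
    set v : ℕ → (ℕ → ℝ) := fun m => outS (fun i => |y i|) (Finset.range m) with hvdef
    have hvle : ∀ m i, |v m i| ≤ |y i| := by
      intro m i
      by_cases h : i ∈ Finset.range m <;> simp [hvdef, outS, h, abs_nonneg, abs_abs]
    have hvmem : ∀ m, X.Mem (v m) := fun m => (mem_of_le (hvle m) hy.1).1
    have hvlim : Tendsto (fun m => X.N (v m)) atTop (𝓝 0) := by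
      refine hy.2 v hvmem (fun m => nae.mpr fun i => ?_) (fun m => nae.mpr fun i => ?_)
        (nae.mpr fun i => ?_)
      · constructor
        · by_cases h : i ∈ Finset.range m <;> simp [hvdef, outS, h, abs_nonneg]
        · by_cases h : i ∈ Finset.range m <;> simp [hvdef, outS, h, abs_nonneg]
      · by_cases h : i ∈ Finset.range m
        · have : i ∈ Finset.range (m+1) := by simp at h ⊢; omega
          simp [hvdef, outS, h, this]
        · by_cases h2 : i ∈ Finset.range (m+1) <;> simp [hvdef, outS, h, h2, abs_nonneg]
      · refine Tendsto.congr' ?_ tendsto_const_nhds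
        filter_upwards [eventually_ge_atTop (i+1)] with m hm
        have : i ∈ Finset.range m := by simp; omega
        simp [hvdef, outS, this]
    have key : ∀ m, Ef X z ≤ X.N (z - y) + X.N (v m) := by
      intro m
      have h1 : Ef X z ≤ X.N (outS z (Finset.range m)) :=
        csInf_le (Ef_bddBelow z) ⟨_, rfl⟩
      have hsplit : outS z (Finset.range m)
          = outS (z - y) (Finset.range m) + outS y (Finset.range m) := funext fun i => by
        by_cases h : i ∈ Finset.range m <;> simp [outS, h]
      have hm1 : X.Mem (outS (z - y) (Finset.range m)) :=
        (mem_of_le (abs_outS_le _ _) (mem_sub hz hy.1)).1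
      have hm2 : X.Mem (outS y (Finset.range m)) :=
        (mem_of_le (abs_outS_le _ _) hy.1).1
      have h2 : X.N (outS z (Finset.range m))
          ≤ X.N (outS (z - y) (Finset.range m)) + X.N (outS y (Finset.range m)) := by
        rw [hsplit]
        exact X.N_add _ _ hm1 hm2
      have h3 : X.N (outS (z - y) (Finset.range m)) ≤ X.N (z - y) :=
        (mem_of_le (abs_outS_le _ _) (mem_sub hz hy.1)).2
      have h4 : X.N (outS y (Finset.range m)) = X.N (v m) :=
        (N_congr_abs (fun i => by
          by_cases h : i ∈ Finset.range m <;> simp [outS, hvdef, h, abs_abs]) (hvmem m)).2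
      linarith
    have hlim2 : Tendsto (fun m => X.N (z - y) + X.N (v m)) atTop (𝓝 (X.N (z - y))) := by
      simpa using tendsto_const_nhds.add hvlim
    exact ge_of_tendsto hlim2 (Filter.Eventually.of_forall key)


end RearAux

open RearAux

/-- Let `X` be a rearrangement invariant Banach sequence space with the Fatou property.
Then for every `x ∈ X`, `dist (x, X_a) = dist (x*, X_a)`. -/
theorem dist_to_oc_eq_dist_rearrangement_seq
    (X : BanachIdealSpace ℕ Measure.count) (hsymm : X.Symmetric) (hFatou : X.Fatou)
    (x : ℕ → ℝ) (hx : X.Mem x) :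
    distIn X.N x X.oc = distIn X.N (rearSeq x) X.oc := by
  by_cases hx0 : x = 0
  · subst hx0
    have h0 : rearSeq (0 : ℕ → ℝ) = (0 : ℕ → ℝ) := by
      funext n
      unfold rearSeq
      have hset : {lam : ℝ | 0 < lam ∧
          Measure.count {k : ℕ | lam < |(0:ℕ→ℝ) k|} < ((n : ℕ∞) : ℝ≥0∞) + 1} = Set.Ioi 0 := by
        ext lam
        simp only [Set.mem_setOf_eq, Set.mem_Ioi, Pi.zero_apply, abs_zero]
        constructor
        · exact fun h => h.1
        · intro hlam
          refine ⟨hlam, ?_⟩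
          have : {k : ℕ | lam < 0} = (∅ : Set ℕ) := by
            ext k; simp; linarith
          rw [this, measure_empty]
          exact lt_of_lt_of_le zero_lt_one le_add_self
      rw [hset, csInf_Ioi]
      simp
    rw [h0]
  · obtain ⟨j, hj⟩ : ∃ j, x j ≠ 0 := by
      by_contra h
      push_neg at h
      exact hx0 (funext h)
    have he : ∀ k, X.Mem (eK k) := mem_eK_all hsymm hx hj
    have hbx : Bdd x := bdd_of_mem hsymm hx hj hx
    have hbr : Bdd (rearSeq x) := bdd_rearSeq hbx
    have hmemr : X.Mem (rearSeq x) := (symm' hsymm (fun lam hl => cc_rearSeq hbx hl) hx).1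
    rw [step1 he hx, step1 he hmemr]
    apply le_antisymm
    · -- Ef x ≤ Ef x*
      apply le_csInf (Set.range_nonempty _)
      rintro b ⟨T, rfl⟩
      obtain ⟨S, hS⟩ := out_le_shift hbx T.card
      have hmout : X.Mem (outS x S) := (mem_of_le (abs_outS_le x S) hx).1
      have hbout : Bdd (outS x S) := bdd_outS hbx S
      have hrout : X.Mem (rearSeq (outS x S)) ∧ X.N (rearSeq (outS x S)) = X.N (outS x S) :=
        symm' hsymm (fun lam hl => cc_rearSeq hbout hl) hmout
      have hmsh : X.Mem (shf (rearSeq x) T.card) :=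
        (mem_of_le (fun k => by
          show |rearSeq x (T.card + k)| ≤ |rearSeq x k|
          rw [abs_rearSeq, abs_rearSeq]
          exact rearSeq_anti hbx (Nat.le_add_left k T.card)) hmemr).1
      have hmoutT : X.Mem (outS (rearSeq x) T) := (mem_of_le (abs_outS_le _ _) hmemr).1
      have hboutT : Bdd (outS (rearSeq x) T) := bdd_outS hbr T
      have hroutT : X.Mem (rearSeq (outS (rearSeq x) T)) ∧
          X.N (rearSeq (outS (rearSeq x) T)) = X.N (outS (rearSeq x) T) :=
        symm' hsymm (fun lam hl => cc_rearSeq hboutT hl) hmoutT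
      have c2 : X.N (rearSeq (outS x S)) ≤ X.N (shf (rearSeq x) T.card) :=
        (mem_of_le (fun k => by
          show |rearSeq (outS x S) k| ≤ |rearSeq x (T.card + k)|
          rw [abs_rearSeq, abs_rearSeq]
          exact hS k) hmsh).2
      have c3 : X.N (shf (rearSeq x) T.card) ≤ X.N (rearSeq (outS (rearSeq x) T)) :=
        (mem_of_le (fun k => by
          show |rearSeq x (T.card + k)| ≤ |rearSeq (outS (rearSeq x) T) k|
          rw [abs_rearSeq, abs_rearSeq]
          have h1 := shift_le_out hbr T k
          rwa [rearSeq_idem hbx] at h1) hroutT.1).2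
      calc Ef X x ≤ X.N (outS x S) := csInf_le (Ef_bddBelow x) ⟨S, rfl⟩
        _ = X.N (rearSeq (outS x S)) := hrout.2.symm
        _ ≤ X.N (shf (rearSeq x) T.card) := c2
        _ ≤ X.N (rearSeq (outS (rearSeq x) T)) := c3
        _ = X.N (outS (rearSeq x) T) := hroutT.2
    · -- Ef x* ≤ Ef x
      apply le_csInf (Set.range_nonempty _)
      rintro b ⟨S, rfl⟩
      have hmsh : X.Mem (shf (rearSeq x) S.card) :=
        (mem_of_le (fun k => by
          show |rearSeq x (S.card + k)| ≤ |rearSeq x k|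
          rw [abs_rearSeq, abs_rearSeq]
          exact rearSeq_anti hbx (Nat.le_add_left k S.card)) hmemr).1
      have heq1 : X.N (outS (rearSeq x) (Finset.range S.card)) = X.N (shf (rearSeq x) S.card) :=
        (symm' hsymm (fun lam hl => cc_out_range_shift hbx S.card hl) hmsh).2
      have hmout : X.Mem (outS x S) := (mem_of_le (abs_outS_le x S) hx).1
      have hrout : X.Mem (rearSeq (outS x S)) ∧ X.N (rearSeq (outS x S)) = X.N (outS x S) :=
        symm' hsymm (fun lam hl => cc_rearSeq (bdd_outS hbx S) hl) hmout
      have c2 : X.N (shf (rearSeq x) S.card) ≤ X.N (rearSeq (outS x S)) :=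
        (mem_of_le (fun k => by
          show |rearSeq x (S.card + k)| ≤ |rearSeq (outS x S) k|
          rw [abs_rearSeq, abs_rearSeq]
          exact shift_le_out hbx S k) hrout.1).2
      calc Ef X (rearSeq x) ≤ X.N (outS (rearSeq x) (Finset.range S.card)) :=
            csInf_le (Ef_bddBelow _) ⟨_, rfl⟩
        _ = X.N (shf (rearSeq x) S.card) := heq1
        _ ≤ X.N (rearSeq (outS x S)) := c2
        _ = X.N (outS x S) := hrout.2
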